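/- Let $u, u^* \in C^2([0,1] \times [0,T])$, let $\nu > 0$, $f \in C^2(\mathbb{R})$, and suppose $u$ solves $u_t + f(u)_x = \nu u_{xx}$ on $(0,1) \times (0,T)$ with $u(0,t) = u(1,t) = 0$. Set $\hat u = u^* - u$ and $\mathcal{R}_{int} = u^*_t + f(u^*)_x - \nu u^*_{xx}$. Then for all $t$, $$\frac{d}{dt}\int_0^1 \hat u^2(x,t)\,dx \le 2H(u(0,t),u^*(0,t)) - 2H(u(1,t),u^*(1,t)) + \mathbf{C} \int_0^1 \hat u^2\,dx + \int_0^1 \mathcal{R}_{int}^2\,dx - 2\nu\int_0^1 \hat u_x^2\,dx + 2\nu(\hat u(1,t)\hat u_x(1,t) - \hat u(0,t)\hat u_x(0,t)),$$ where $H(u,u^*) = Q(u^*) - Q(u) - u(f(u^*)-f(u))$ with $Q(u) = \int_a^u s f'(s)\,ds$, and $\mathbf{C} = 1 + 2\|f''\|_{L^\infty(I)}\|u_x\|_{L^\infty}$ with $I$ the range interval containing values of $u$ and $u^*$. -/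

import Mathlib

/-- Entropy flux `Q(u) = ∫_a^u s f'(s) ds`. -/
noncomputable def Qent (f : ℝ → ℝ) (a v : ℝ) : ℝ := ∫ s in a..v, s * deriv f s

/-- Relative entropy flux `H(u,u*) = Q(u*) - Q(u) - u (f(u*) - f(u))`. -/
noncomputable def Hent (f : ℝ → ℝ) (a U Ustar : ℝ) : ℝ :=
  Qent f a Ustar - Qent f a U - U * (f Ustar - f U)

open MeasureTheory Set intervalIntegral

namespace VCLaux

noncomputable def px (F : ℝ × ℝ → ℝ) (q : ℝ × ℝ) : ℝ := fderiv ℝ F q (1, 0)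
noncomputable def pt (F : ℝ × ℝ → ℝ) (q : ℝ × ℝ) : ℝ := fderiv ℝ F q (0, 1)

lemma hasDerivAt_px {F : ℝ × ℝ → ℝ} (hF : Differentiable ℝ F) (x t : ℝ) :
    HasDerivAt (fun y => F (y, t)) (px F (x, t)) x := by
  have h1 : HasDerivAt (fun y : ℝ => (y, t)) (((1:ℝ), (0:ℝ))) x :=
    (hasDerivAt_id x).prodMk (hasDerivAt_const x t)
  exact (hF (x, t)).hasFDerivAt.comp_hasDerivAt x h1

lemma hasDerivAt_pt {F : ℝ × ℝ → ℝ} (hF : Differentiable ℝ F) (x t : ℝ) :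
    HasDerivAt (fun s => F (x, s)) (pt F (x, t)) t := by
  have h1 : HasDerivAt (fun s : ℝ => (x, s)) (((0:ℝ), (1:ℝ))) t :=
    (hasDerivAt_const t x).prodMk (hasDerivAt_id t)
  exact (hF (x, t)).hasFDerivAt.comp_hasDerivAt t h1

lemma contDiff_px {F : ℝ × ℝ → ℝ} (hF : ContDiff ℝ 2 F) : ContDiff ℝ 1 (px F) :=
  (hF.fderiv_right (by norm_num)).clm_apply contDiff_const

lemma continuous_px {F : ℝ × ℝ → ℝ} (hF : ContDiff ℝ 1 F) : Continuous (px F) :=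
  (((hF.fderiv_right (le_refl 1) : ContDiff ℝ 0 _).clm_apply contDiff_const)).continuous

lemma continuous_pt {F : ℝ × ℝ → ℝ} (hF : ContDiff ℝ 1 F) : Continuous (pt F) :=
  (((hF.fderiv_right (le_refl 1) : ContDiff ℝ 0 _).clm_apply contDiff_const)).continuous

lemma taylor_bd {f : ℝ → ℝ} (hf : ContDiff ℝ 2 f) {C : ℝ} {S : Set ℝ} (hS : Convex ℝ S)
    (hC : ∀ s ∈ S, |deriv (deriv f) s| ≤ C) {p q : ℝ} (hp : p ∈ S) (hq : q ∈ S) :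
    |f q - f p - deriv f p * (q - p)| ≤ C * (q - p) ^ 2 := by
  have hC0 : 0 ≤ C := le_trans (abs_nonneg _) (hC p hp)
  have hf1 : ContDiff ℝ 1 (deriv f) := by
    have := (contDiff_succ_iff_deriv (n := 1)).1 (by exact_mod_cast hf)
    exact this.2.2
  have hfd : Differentiable ℝ f := hf.differentiable two_ne_zero
  have hlip : ∀ s ∈ S, |deriv f s - deriv f p| ≤ C * |s - p| := by
    intro s hs
    have := Convex.norm_image_sub_le_of_norm_deriv_le
      (f := deriv f) (C := C) (fun y _ => hf1.differentiable one_ne_zero y)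
      (fun y hy => hC y hy) hS hp hs
    simpa [Real.norm_eq_abs] using this
  have hsub : uIcc p q ⊆ S := hS.ordConnected.uIcc_subset hp hq
  have habs : ∀ s ∈ uIcc p q, |s - p| ≤ |q - p| := by
    intro s hs
    rw [Set.mem_uIcc] at hs
    rw [abs_sub_le_iff]
    rcases hs with ⟨h1, h2⟩ | ⟨h1, h2⟩ <;>
      constructor <;>
      · cases' le_or_gt p q with h h <;>
        [ (have := le_abs_self (q - p)); (have := neg_abs_le (q - p))] <;> linarith
  set g : ℝ → ℝ := fun s => f s - deriv f p * s with hg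
  have hgd : ∀ s, HasDerivAt g (deriv f s - deriv f p) s := by
    intro s
    have h1 : HasDerivAt (fun y : ℝ => deriv f p * y) (deriv f p) s := by
      simpa using (hasDerivAt_id s).const_mul (deriv f p)
    exact ((hfd s).hasDerivAt).sub h1
  have key : ‖g q - g p‖ ≤ (C * |q - p|) * ‖q - p‖ := by
    apply Convex.norm_image_sub_le_of_norm_hasDerivWithin_le
      (f := g) (f' := fun s => deriv f s - deriv f p) (s := uIcc p q)
      (fun y hy => (hgd y).hasDerivWithinAt)
      (fun y hy => ?_) (convex_uIcc p q) (Set.left_mem_uIcc) (Set.right_mem_uIcc)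
    · calc ‖deriv f y - deriv f p‖ = |deriv f y - deriv f p| := rfl
        _ ≤ C * |y - p| := hlip y (hsub hy)
        _ ≤ C * |q - p| := mul_le_mul_of_nonneg_left (habs y hy) hC0
  have heq : g q - g p = f q - f p - deriv f p * (q - p) := by simp [hg]; ring
  calc |f q - f p - deriv f p * (q - p)| = ‖g q - g p‖ := by rw [heq]; rfl
    _ ≤ (C * |q - p|) * ‖q - p‖ := key
    _ = C * (q - p) ^ 2 := by
        rw [Real.norm_eq_abs, mul_assoc, abs_mul_abs_self]; ring

end VCLaux

open VCLaux

open VCLaux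

set_option maxHeartbeats 2000000 in
/-- Key differential inequality for the viscous scalar conservation law error
`û = u* - u`, with `ℛ_int = u*_t + f(u*)_x - ν u*_xx`:
`d/dt ∫_0^1 û² ≤ 2H(u(0),u*(0)) - 2H(u(1),u*(1)) + 𝐂∫û² + ∫ℛ_int²
 - 2ν∫û_x² + 2ν(û(1)û_x(1) - û(0)û_x(0))`,
where `𝐂 = 1 + 2‖f''‖_{L^∞([-B,B])}‖u_x‖_{L^∞}` and `[-B,B]` contains the values of
`u` and `u*`. -/
theorem viscous_conservation_law_energy_inequality
    (T ν a B Mx : ℝ) (hT : 0 < T) (hν : 0 < ν) (hB : 0 ≤ B) (hMx : 0 ≤ Mx)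
    (f : ℝ → ℝ) (hf : ContDiff ℝ 2 f)
    (u ustar : ℝ → ℝ → ℝ)
    (hu : ContDiff ℝ 2 (fun q : ℝ × ℝ => u q.1 q.2))
    (hustar : ContDiff ℝ 2 (fun q : ℝ × ℝ => ustar q.1 q.2))
    (hpde : ∀ x ∈ Set.Ioo (0:ℝ) 1, ∀ t ∈ Set.Ioo (0:ℝ) T,
      deriv (fun s => u x s) t + deriv (fun y => f (u y t)) x =
        ν * deriv (fun y => deriv (fun z => u z t) y) x)
    (hbc : ∀ t ∈ Set.Icc (0:ℝ) T, u 0 t = 0 ∧ u 1 t = 0)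
    (hrange : ∀ x ∈ Set.Icc (0:ℝ) 1, ∀ t ∈ Set.Icc (0:ℝ) T,
      |u x t| ≤ B ∧ |ustar x t| ≤ B)
    (hux : ∀ x ∈ Set.Icc (0:ℝ) 1, ∀ t ∈ Set.Icc (0:ℝ) T,
      |deriv (fun y => u y t) x| ≤ Mx) :
    ∀ t ∈ Set.Ioo (0:ℝ) T,
      deriv (fun s => ∫ x in (0:ℝ)..1, (ustar x s - u x s) ^ 2) t ≤
        2 * Hent f a (u 0 t) (ustar 0 t) - 2 * Hent f a (u 1 t) (ustar 1 t) +
        (1 + 2 * (⨆ s : Set.Icc (-B) B, |deriv (deriv f) s|) * Mx) *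
          (∫ x in (0:ℝ)..1, (ustar x t - u x t) ^ 2) +
        (∫ x in (0:ℝ)..1,
          (deriv (fun s => ustar x s) t + deriv (fun y => f (ustar y t)) x -
            ν * deriv (fun y => deriv (fun z => ustar z t) y) x) ^ 2) -
        2 * ν * (∫ x in (0:ℝ)..1, (deriv (fun y => ustar y t - u y t) x) ^ 2) +
        2 * ν * ((ustar 1 t - u 1 t) * deriv (fun y => ustar y t - u y t) 1 -
                 (ustar 0 t - u 0 t) * deriv (fun y => ustar y t - u y t) 0) := by
  intro t ht
  obtain ⟨ht0, htT⟩ := ht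
  have htIcc : t ∈ Set.Icc (0:ℝ) T := ⟨le_of_lt ht0, le_of_lt htT⟩
  set U : ℝ × ℝ → ℝ := fun q => u q.1 q.2 with hUdef
  set V : ℝ × ℝ → ℝ := fun q => ustar q.1 q.2 with hVdef
  have hU2 : ContDiff ℝ 2 U := hu
  have hV2 : ContDiff ℝ 2 V := hustar
  have hUd : Differentiable ℝ U := hU2.differentiable two_ne_zero
  have hVd : Differentiable ℝ V := hV2.differentiable two_ne_zero
  have hpxU1 : ContDiff ℝ 1 (px U) := contDiff_px hU2
  have hpxV1 : ContDiff ℝ 1 (px V) := contDiff_px hV2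
  have hpxUd : Differentiable ℝ (px U) := hpxU1.differentiable one_ne_zero
  have hpxVd : Differentiable ℝ (px V) := hpxV1.differentiable one_ne_zero
  have cU : Continuous U := hU2.continuous
  have cV : Continuous V := hV2.continuous
  have cpxU : Continuous (px U) := hpxU1.continuous
  have cpxV : Continuous (px V) := hpxV1.continuous
  have cptU : Continuous (pt U) := continuous_pt (hU2.of_le one_le_two)
  have cptV : Continuous (pt V) := continuous_pt (hV2.of_le one_le_two)
  have cpxxU : Continuous (px (px U)) := continuous_px hpxU1
  have cpxxV : Continuous (px (px V)) := continuous_px hpxV1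
  have cf : Continuous f := hf.continuous
  have cf' : Continuous (deriv f) := hf.continuous_deriv one_le_two
  have hfd : Differentiable ℝ f := hf.differentiable two_ne_zero
  have cxs : ∀ s : ℝ, Continuous fun x : ℝ => (x, s) :=
    fun s => continuous_id.prodMk continuous_const
  -- deriv conversions
  have hdxu : ∀ x s : ℝ, deriv (fun y => u y s) x = px U (x, s) :=
    fun x s => (hasDerivAt_px hUd x s).deriv
  have hdtu : ∀ x s : ℝ, deriv (fun r => u x r) s = pt U (x, s) :=
    fun x s => (hasDerivAt_pt hUd x s).deriv
  have hdtv : ∀ x s : ℝ, deriv (fun r => ustar x r) s = pt V (x, s) :=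
    fun x s => (hasDerivAt_pt hVd x s).deriv
  have hxxu : ∀ x s : ℝ, deriv (fun y => deriv (fun z => u z s) y) x = px (px U) (x, s) := by
    intro x s
    have h1 : (fun y => deriv (fun z => u z s) y) = fun y => px U (y, s) :=
      funext fun y => (hasDerivAt_px hUd y s).deriv
    rw [h1]; exact (hasDerivAt_px hpxUd x s).deriv
  have hxxv : ∀ x s : ℝ, deriv (fun y => deriv (fun z => ustar z s) y) x = px (px V) (x, s) := by
    intro x s
    have h1 : (fun y => deriv (fun z => ustar z s) y) = fun y => px V (y, s) :=
      funext fun y => (hasDerivAt_px hVd y s).deriv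
    rw [h1]; exact (hasDerivAt_px hpxVd x s).deriv
  have hfsub : ∀ x s : ℝ, HasDerivAt (fun y => ustar y s - u y s)
      (px V (x, s) - px U (x, s)) x :=
    fun x s => (hasDerivAt_px hVd x s).sub (hasDerivAt_px hUd x s)
  have hdsub : ∀ x s : ℝ, deriv (fun y => ustar y s - u y s) x = px V (x, s) - px U (x, s) :=
    fun x s => (hfsub x s).deriv
  have hdfV : ∀ x s : ℝ, HasDerivAt (fun y => f (ustar y s))
      (deriv f (ustar x s) * px V (x, s)) x :=
    fun x s => ((hfd (ustar x s)).hasDerivAt).comp x (hasDerivAt_px hVd x s)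
  have hdfU : ∀ x s : ℝ, HasDerivAt (fun y => f (u y s))
      (deriv f (u x s) * px U (x, s)) x :=
    fun x s => ((hfd (u x s)).hasDerivAt).comp x (hasDerivAt_px hUd x s)
  have hdfVx : ∀ x s : ℝ, deriv (fun y => f (ustar y s)) x
      = deriv f (ustar x s) * px V (x, s) := fun x s => (hdfV x s).deriv
  have hdfUx : ∀ x s : ℝ, deriv (fun y => f (u y s)) x
      = deriv f (u x s) * px U (x, s) := fun x s => (hdfU x s).deriv
  -- Q and H derivatives
  have hQ : ∀ v : ℝ, HasDerivAt (fun z => Qent f a z) (v * deriv f v) v := fun v =>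
    ((continuous_id.mul cf').integral_hasStrictDerivAt a v).hasDerivAt
  have hH : ∀ x : ℝ, HasDerivAt (fun y => Hent f a (u y t) (ustar y t))
      ((ustar x t - u x t) * deriv f (ustar x t) * px V (x, t)
        - px U (x, t) * (f (ustar x t) - f (u x t))) x := by
    intro x
    have hQV : HasDerivAt (fun y => Qent f a (ustar y t))
        (ustar x t * deriv f (ustar x t) * px V (x, t)) x := by
      have := (hQ (ustar x t)).comp x (hasDerivAt_px hVd x t)
      simpa [mul_assoc, Function.comp_def] using this
    have hQU : HasDerivAt (fun y => Qent f a (u y t))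
        (u x t * deriv f (u x t) * px U (x, t)) x := by
      have := (hQ (u x t)).comp x (hasDerivAt_px hUd x t)
      simpa [mul_assoc, Function.comp_def] using this
    have hprod : HasDerivAt (fun y => u y t * (f (ustar y t) - f (u y t)))
        (px U (x, t) * (f (ustar x t) - f (u x t))
          + u x t * (deriv f (ustar x t) * px V (x, t) - deriv f (u x t) * px U (x, t))) x :=
      (hasDerivAt_px hUd x t).mul ((hdfV x t).sub (hdfU x t))
    have h2 := (hQV.fun_sub hQU).fun_sub hprod
    refine h2.congr_deriv ?_
    ring
  -- the sup constant
  have cf'' : Continuous (deriv (deriv f)) := by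
    have hf1 : ContDiff ℝ 1 (deriv f) :=
      ((contDiff_succ_iff_deriv (n := 1)).1 (by exact_mod_cast hf)).2.2
    exact hf1.continuous_deriv le_rfl
  set C := ⨆ s : Set.Icc (-B) B, |deriv (deriv f) s| with hCdef
  have hbdd : BddAbove (Set.range fun s : Set.Icc (-B) B => |deriv (deriv f) ↑s|) := by
    rw [show (fun s : Set.Icc (-B) B => |deriv (deriv f) ↑s|)
        = (fun z => |deriv (deriv f) z|) ∘ Subtype.val from rfl, Set.range_comp,
      Subtype.range_coe]
    exact (isCompact_Icc.image_of_continuousOn cf''.abs.continuousOn).bddAbove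
  have hCb : ∀ s ∈ Set.Icc (-B) B, |deriv (deriv f) s| ≤ C :=
    fun s hs => le_ciSup hbdd ⟨s, hs⟩
  have hC0 : 0 ≤ C := le_trans (abs_nonneg _) (hCb 0 ⟨by linarith, hB⟩)
  -- time derivative of the energy
  have cw2 : Continuous fun q : ℝ × ℝ => (V q - U q) ^ 2 := (cV.sub cU).pow 2
  have cF' : Continuous fun q : ℝ × ℝ => 2 * (V q - U q) * (pt V q - pt U q) :=
    (continuous_const.mul (cV.sub cU)).mul (cptV.sub cptU)
  obtain ⟨K, hK⟩ := IsCompact.exists_bound_of_continuousOn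
    ((isCompact_Icc (a := (0:ℝ)) (b := 1)).prod (isCompact_Icc (a := t - 1) (b := t + 1)))
    cF'.continuousOn
  have hderiv_int : HasDerivAt (fun s => ∫ x in (0:ℝ)..1, (ustar x s - u x s) ^ 2)
      (∫ x in (0:ℝ)..1, 2 * (ustar x t - u x t) * (pt V (x, t) - pt U (x, t))) t := by
    have h := intervalIntegral.hasDerivAt_integral_of_dominated_loc_of_deriv_le
      (F := fun s x => (ustar x s - u x s) ^ 2)
      (F' := fun s x => 2 * (ustar x s - u x s) * (pt V (x, s) - pt U (x, s)))
      (a := 0) (b := 1) (x₀ := t) (s := Metric.ball t 1) (bound := fun _ => K) (μ := volume)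
      (Metric.ball_mem_nhds t one_pos)
      (Filter.Eventually.of_forall fun s =>
        ((cw2.comp (cxs s)).aestronglyMeasurable))
      ((cw2.comp (cxs t)).intervalIntegrable 0 1)
      ((cF'.comp (cxs t)).aestronglyMeasurable)
      (MeasureTheory.ae_of_all _ fun x hx s hs => by
        have hx' : x ∈ Set.Ioc (0:ℝ) 1 := by
          rwa [Set.uIoc_of_le (by norm_num : (0:ℝ) ≤ 1)] at hx
        have hs' : |s - t| < 1 := by
          have := Metric.mem_ball.1 hs; rwa [Real.dist_eq] at this
        have h1 := abs_lt.1 hs'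
        exact hK (x, s) ⟨⟨le_of_lt hx'.1, hx'.2⟩, ⟨by linarith, by linarith⟩⟩)
      (intervalIntegrable_const)
      (MeasureTheory.ae_of_all _ fun x hx s hs => by
        have h1 : HasDerivAt (fun r => ustar x r - u x r)
            (pt V (x, s) - pt U (x, s)) s :=
          (hasDerivAt_pt hVd x s).sub (hasDerivAt_pt hUd x s)
        simpa using h1.fun_pow 2)
    exact h.2
  rw [hderiv_int.deriv]
  -- rewrite remaining derivatives in the goal
  have eR : (∫ x in (0:ℝ)..1,
        (deriv (fun s => ustar x s) t + deriv (fun y => f (ustar y t)) x -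
          ν * deriv (fun y => deriv (fun z => ustar z t) y) x) ^ 2)
      = ∫ x in (0:ℝ)..1,
        (pt V (x, t) + deriv f (ustar x t) * px V (x, t) - ν * px (px V) (x, t)) ^ 2 :=
    intervalIntegral.integral_congr fun x _ => by rw [hdtv, hdfVx, hxxv]
  have eWx : (∫ x in (0:ℝ)..1, (deriv (fun y => ustar y t - u y t) x) ^ 2)
      = ∫ x in (0:ℝ)..1, (px V (x, t) - px U (x, t)) ^ 2 :=
    intervalIntegral.integral_congr fun x _ => by rw [hdsub]
  rw [eR, eWx, hdsub 1 t, hdsub 0 t]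
  -- continuity of the various x-integrands
  have cRRq : Continuous fun q : ℝ × ℝ =>
      pt V q + deriv f (V q) * px V q - ν * px (px V) q :=
    ((cptV.add ((cf'.comp cV).mul cpxV)).sub (continuous_const.mul cpxxV))
  have cHPq : Continuous fun q : ℝ × ℝ =>
      (V q - U q) * deriv f (V q) * px V q - px U q * (f (V q) - f (U q)) :=
    (((cV.sub cU).mul (cf'.comp cV)).mul cpxV).sub
      (cpxU.mul ((cf.comp cV).sub (cf.comp cU)))
  have cR2q : Continuous fun q : ℝ × ℝ =>
      f (V q) - f (U q) - deriv f (U q) * (V q - U q) :=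
    ((cf.comp cV).sub (cf.comp cU)).sub ((cf'.comp cU).mul (cV.sub cU))
  have iw2 : IntervalIntegrable (fun x => (ustar x t - u x t) ^ 2) volume 0 1 :=
    (cw2.comp (cxs t)).intervalIntegrable 0 1
  have iwRR : IntervalIntegrable (fun x => (ustar x t - u x t) *
      (pt V (x, t) + deriv f (ustar x t) * px V (x, t) - ν * px (px V) (x, t)))
      volume 0 1 :=
    (((cV.sub cU).mul cRRq).comp (cxs t)).intervalIntegrable 0 1
  have iRR2 : IntervalIntegrable (fun x =>
      (pt V (x, t) + deriv f (ustar x t) * px V (x, t) - ν * px (px V) (x, t)) ^ 2)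
      volume 0 1 :=
    ((cRRq.pow 2).comp (cxs t)).intervalIntegrable 0 1
  have iHP : IntervalIntegrable (fun x =>
      (ustar x t - u x t) * deriv f (ustar x t) * px V (x, t)
        - px U (x, t) * (f (ustar x t) - f (u x t))) volume 0 1 :=
    (cHPq.comp (cxs t)).intervalIntegrable 0 1
  have iT : IntervalIntegrable (fun x => px U (x, t) *
      (f (ustar x t) - f (u x t) - deriv f (u x t) * (ustar x t - u x t))) volume 0 1 :=
    ((cpxU.mul cR2q).comp (cxs t)).intervalIntegrable 0 1
  have iwxx : IntervalIntegrable (fun x =>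
      (ustar x t - u x t) * (px (px V) (x, t) - px (px U) (x, t))) volume 0 1 :=
    (((cV.sub cU).mul (cpxxV.sub cpxxU)).comp (cxs t)).intervalIntegrable 0 1
  have iwx2 : IntervalIntegrable (fun x => (px V (x, t) - px U (x, t)) ^ 2) volume 0 1 :=
    (((cpxV.sub cpxU).pow 2).comp (cxs t)).intervalIntegrable 0 1
  have iwx2' : IntervalIntegrable (fun x =>
      (px V (x, t) - px U (x, t)) * (px V (x, t) - px U (x, t))) volume 0 1 :=
    (((cpxV.sub cpxU).mul (cpxV.sub cpxU)).comp (cxs t)).intervalIntegrable 0 1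
  -- pointwise identity on the interior and a.e. rewriting of the integrand
  have hkey : ∀ x ∈ Set.Ioo (0:ℝ) 1,
      2 * (ustar x t - u x t) * (pt V (x, t) - pt U (x, t)) =
      2 * ((ustar x t - u x t) *
          (pt V (x, t) + deriv f (ustar x t) * px V (x, t) - ν * px (px V) (x, t)))
        - 2 * ((ustar x t - u x t) * deriv f (ustar x t) * px V (x, t)
            - px U (x, t) * (f (ustar x t) - f (u x t)))
        - 2 * (px U (x, t) *
            (f (ustar x t) - f (u x t) - deriv f (u x t) * (ustar x t - u x t)))
        + (2 * ν) * ((ustar x t - u x t) * (px (px V) (x, t) - px (px U) (x, t))) := by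
    intro x hx
    have hpde' : pt U (x, t) + deriv f (u x t) * px U (x, t) = ν * px (px U) (x, t) := by
      have h0 := hpde x hx t ⟨ht0, htT⟩
      rwa [hdtu, hdfUx, hxxu] at h0
    linear_combination (-(2*(ustar x t - u x t))) * hpde'
  -- a.e. version of the pointwise identity and integral rewriting
  have hae : ∀ᵐ x ∂(volume : Measure ℝ), x ∈ Set.uIoc (0:ℝ) 1 →
      2 * (ustar x t - u x t) * (pt V (x, t) - pt U (x, t)) =
      2 * ((ustar x t - u x t) *
          (pt V (x, t) + deriv f (ustar x t) * px V (x, t) - ν * px (px V) (x, t)))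
        - 2 * ((ustar x t - u x t) * deriv f (ustar x t) * px V (x, t)
            - px U (x, t) * (f (ustar x t) - f (u x t)))
        - 2 * (px U (x, t) *
            (f (ustar x t) - f (u x t) - deriv f (u x t) * (ustar x t - u x t)))
        + (2 * ν) * ((ustar x t - u x t) * (px (px V) (x, t) - px (px U) (x, t))) := by
    have h1 : ∀ᵐ x ∂(volume : Measure ℝ), x ≠ 1 := by
      rw [MeasureTheory.ae_iff]
      simpa using MeasureTheory.measure_singleton (1:ℝ)
    filter_upwards [h1] with x hne hxI
    rw [Set.uIoc_of_le (by norm_num : (0:ℝ) ≤ 1)] at hxI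
    exact hkey x ⟨hxI.1, lt_of_le_of_ne hxI.2 hne⟩
  have hI0 : (∫ x in (0:ℝ)..1, 2 * (ustar x t - u x t) * (pt V (x, t) - pt U (x, t)))
      = ∫ x in (0:ℝ)..1,
        (2 * ((ustar x t - u x t) *
            (pt V (x, t) + deriv f (ustar x t) * px V (x, t) - ν * px (px V) (x, t)))
          - 2 * ((ustar x t - u x t) * deriv f (ustar x t) * px V (x, t)
              - px U (x, t) * (f (ustar x t) - f (u x t)))
          - 2 * (px U (x, t) *
              (f (ustar x t) - f (u x t) - deriv f (u x t) * (ustar x t - u x t)))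
          + (2 * ν) * ((ustar x t - u x t) * (px (px V) (x, t) - px (px U) (x, t)))) :=
    intervalIntegral.integral_congr_ae hae
  -- split the integral
  have es1 := intervalIntegral.integral_add
    (((iwRR.const_mul 2).sub (iHP.const_mul 2)).sub (iT.const_mul 2))
    (iwxx.const_mul (2 * ν))
  have es2 := intervalIntegral.integral_sub
    ((iwRR.const_mul 2).sub (iHP.const_mul 2)) (iT.const_mul 2)
  have es3 := intervalIntegral.integral_sub (iwRR.const_mul 2) (iHP.const_mul 2)
  -- FTC for the relative entropy flux
  have hFTC : (∫ x in (0:ℝ)..1,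
        ((ustar x t - u x t) * deriv f (ustar x t) * px V (x, t)
          - px U (x, t) * (f (ustar x t) - f (u x t))))
      = Hent f a (u 1 t) (ustar 1 t) - Hent f a (u 0 t) (ustar 0 t) :=
    intervalIntegral.integral_eq_sub_of_hasDerivAt (fun x _ => hH x) iHP
  have h2JB : (∫ x in (0:ℝ)..1,
        2 * ((ustar x t - u x t) * deriv f (ustar x t) * px V (x, t)
          - px U (x, t) * (f (ustar x t) - f (u x t))))
      = 2 * (Hent f a (u 1 t) (ustar 1 t) - Hent f a (u 0 t) (ustar 0 t)) := by
    rw [intervalIntegral.integral_const_mul, hFTC]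
  -- integration by parts for the viscous term
  have hparts : (∫ x in (0:ℝ)..1,
        (ustar x t - u x t) * (px (px V) (x, t) - px (px U) (x, t)))
      = (ustar 1 t - u 1 t) * (px V (1, t) - px U (1, t))
        - (ustar 0 t - u 0 t) * (px V (0, t) - px U (0, t))
        - ∫ x in (0:ℝ)..1, (px V (x, t) - px U (x, t)) * (px V (x, t) - px U (x, t)) :=
    intervalIntegral.integral_mul_deriv_eq_deriv_mul
      (fun x _ => hfsub x t)
      (fun x _ => (hasDerivAt_px hpxVd x t).sub (hasDerivAt_px hpxUd x t))
      (((cpxV.sub cpxU).comp (cxs t)).intervalIntegrable 0 1)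
      (((cpxxV.sub cpxxU).comp (cxs t)).intervalIntegrable 0 1)
  have hwx2 : (∫ x in (0:ℝ)..1, (px V (x, t) - px U (x, t)) * (px V (x, t) - px U (x, t)))
      = ∫ x in (0:ℝ)..1, (px V (x, t) - px U (x, t)) ^ 2 :=
    intervalIntegral.integral_congr fun x _ => (pow_two _).symm
  have hJD : (∫ x in (0:ℝ)..1,
        (2 * ν) * ((ustar x t - u x t) * (px (px V) (x, t) - px (px U) (x, t))))
      = (2 * ν) * ((ustar 1 t - u 1 t) * (px V (1, t) - px U (1, t))
          - (ustar 0 t - u 0 t) * (px V (0, t) - px U (0, t))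
          - ∫ x in (0:ℝ)..1, (px V (x, t) - px U (x, t)) ^ 2) := by
    rw [intervalIntegral.integral_const_mul, hparts, hwx2]
  -- Young's inequality term
  have hb1 : (∫ x in (0:ℝ)..1,
        2 * ((ustar x t - u x t) *
          (pt V (x, t) + deriv f (ustar x t) * px V (x, t) - ν * px (px V) (x, t))))
      ≤ (∫ x in (0:ℝ)..1, (ustar x t - u x t) ^ 2)
        + ∫ x in (0:ℝ)..1,
          (pt V (x, t) + deriv f (ustar x t) * px V (x, t) - ν * px (px V) (x, t)) ^ 2 := by
    have h1 : (∫ x in (0:ℝ)..1,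
          2 * ((ustar x t - u x t) *
            (pt V (x, t) + deriv f (ustar x t) * px V (x, t) - ν * px (px V) (x, t))))
        ≤ ∫ x in (0:ℝ)..1, ((ustar x t - u x t) ^ 2
            + (pt V (x, t) + deriv f (ustar x t) * px V (x, t)
                - ν * px (px V) (x, t)) ^ 2) := by
      apply intervalIntegral.integral_mono_on (by norm_num) (iwRR.const_mul 2) (iw2.add iRR2)
      intro x hx
      nlinarith [sq_nonneg ((ustar x t - u x t)
        - (pt V (x, t) + deriv f (ustar x t) * px V (x, t) - ν * px (px V) (x, t)))]
    rwa [intervalIntegral.integral_add iw2 iRR2] at h1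
  -- Taylor remainder term
  have hb2 : (-(C * Mx)) * (∫ x in (0:ℝ)..1, (ustar x t - u x t) ^ 2)
      ≤ ∫ x in (0:ℝ)..1, px U (x, t) *
          (f (ustar x t) - f (u x t) - deriv f (u x t) * (ustar x t - u x t)) := by
    have hpt : ∀ x ∈ Set.Icc (0:ℝ) 1,
        (-(C * Mx)) * (ustar x t - u x t) ^ 2 ≤ px U (x, t) *
          (f (ustar x t) - f (u x t) - deriv f (u x t) * (ustar x t - u x t)) := by
      intro x hx
      have hMxb : |px U (x, t)| ≤ Mx := by rw [← hdxu x t]; exact hux x hx t htIcc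
      have hpq := hrange x hx t htIcc
      have hmemp : u x t ∈ Set.Icc (-B) B := abs_le.1 hpq.1
      have hmemq : ustar x t ∈ Set.Icc (-B) B := abs_le.1 hpq.2
      have hR2 : |f (ustar x t) - f (u x t) - deriv f (u x t) * (ustar x t - u x t)|
          ≤ C * (ustar x t - u x t) ^ 2 :=
        taylor_bd hf (convex_Icc _ _) hCb hmemp hmemq
      have h3 : |px U (x, t) *
          (f (ustar x t) - f (u x t) - deriv f (u x t) * (ustar x t - u x t))|
          ≤ Mx * (C * (ustar x t - u x t) ^ 2) := by
        rw [abs_mul]; exact mul_le_mul hMxb hR2 (abs_nonneg _) hMx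
      nlinarith [neg_abs_le (px U (x, t) *
        (f (ustar x t) - f (u x t) - deriv f (u x t) * (ustar x t - u x t)))]
    have h4 := intervalIntegral.integral_mono_on (by norm_num)
      (iw2.const_mul (-(C * Mx))) iT hpt
    rwa [intervalIntegral.integral_const_mul] at h4
  have h2JC : (∫ x in (0:ℝ)..1,
        2 * (px U (x, t) *
          (f (ustar x t) - f (u x t) - deriv f (u x t) * (ustar x t - u x t))))
      = 2 * ∫ x in (0:ℝ)..1, px U (x, t) *
          (f (ustar x t) - f (u x t) - deriv f (u x t) * (ustar x t - u x t)) :=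
    intervalIntegral.integral_const_mul 2 _
  rw [hI0, es1, es2, es3, h2JB, hJD, h2JC]
  linarith [hb1, hb2]
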